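/- arXiv:1707.03342 — 2 statements merged into one kernel-verified Lean document; each statement's English description precedes it below -/
import Mathlib

section
/- Let α < 0 < β, ε > 0, and let p < q with ℓ := q − p, and let ℓ_α, ℓ_β ∈ [0, ε/2] be the phase lengths of [p,q]. Assume ℓ + ℓ_α − ℓ_β ≤ 4/(β−α), and set v := 2/ℓ + (1/ℓ)∫_p^q g(s/ε) ds. Then the function n(x) := −1 + ∫_p^x (v − g(s/ε)) ds is nondecreasing on [p,q], satisfies n(q) = 1, and −1 ≤ n(x) ≤ 1 for every x ∈ [p,q]; in particular the edge [p,q] with endpoint values n(p) = −1, n(q) = 1 (a convex horizontal edge) is calibrable with velocity v. -/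
open MeasureTheory Set

/-- The 1-periodic forcing term: `α` within distance `1/4` of the integers, `β` otherwise. -/
noncomputable def g (α β x : ℝ) : ℝ := if |x - (round x : ℝ)| ≤ 1/4 then α else β

/-- The edge `[p,q]` with endpoint values `a`, `b` is calibrated with velocity `v` by the
Lipschitz field `n : [p,q] → [-1,1]` satisfying `n' = v - g(·/ε)` a.e. on `[p,q]`. -/
def Calibrates (α β ε p q a b v : ℝ) (n : ℝ → ℝ) : Prop :=
  (∃ K : NNReal, LipschitzOnWith K n (Icc p q)) ∧
  (∀ x ∈ Icc p q, n x ∈ Icc (-1 : ℝ) 1) ∧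
  n p = a ∧ n q = b ∧
  ∀ᵐ x ∂(volume.restrict (Icc p q)), HasDerivAt n (v - g α β (x / ε)) x

lemma g_measurable (α β : ℝ) : Measurable (g α β) := by
  unfold g
  refine Measurable.ite ?_ measurable_const measurable_const
  have hr : Measurable fun x : ℝ => (round x : ℝ) := by
    have : Measurable fun x : ℝ => (⌊x + 1/2⌋ : ℝ) :=
      measurable_from_top.comp (Int.measurable_floor.comp (measurable_id.add_const (1/2)))
    simpa [round_eq] using this
  exact measurableSet_le ((measurable_id.sub hr).abs) measurable_const

lemma g_bounds (α β x : ℝ) (hαβ : α ≤ β) : α ≤ g α β x ∧ g α β x ≤ β := by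
  unfold g; split <;> constructor <;> first | rfl | linarith

lemma g_continuousAt (α β t : ℝ)
    (h : ∀ k : ℤ, t ≠ k + 1/4 ∧ t ≠ k - 1/4 ∧ t ≠ k + 1/2) :
    ContinuousAt (g α β) t := by
  set m : ℤ := ⌊t + 1/2⌋ with hm
  have h1 : (m : ℝ) ≤ t + 1/2 := Int.floor_le _
  have h1' : (m : ℝ) < t + 1/2 := by
    rcases lt_or_eq_of_le h1 with h' | h'
    · exact h'
    · exact absurd (by push_cast; linarith : t = ((m - 1 : ℤ) : ℝ) + 1/2) (h (m - 1)).2.2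
  have h2 : t + 1/2 < (m : ℝ) + 1 := Int.lt_floor_add_one _
  have hc : |t - (m : ℝ)| ≠ 1/4 := by
    intro hc
    rcases abs_eq (by norm_num : (0:ℝ) ≤ 1/4) |>.mp hc with h' | h'
    · exact (h m).1 (by linarith)
    · exact (h m).2.1 (by linarith)
  set δ : ℝ := min (min (t + 1/2 - m) ((m : ℝ) + 1 - (t + 1/2))) (abs (|t - (m:ℝ)| - 1/4)) with hδ
  have hδ0 : 0 < δ := by
    refine lt_min (lt_min (by linarith) (by linarith)) ?_
    exact abs_pos.mpr (sub_ne_zero.mpr hc)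
  apply Filter.EventuallyEq.continuousAt (y := g α β t)
  filter_upwards [Metric.ball_mem_nhds t hδ0] with s hs
  rw [Metric.mem_ball, Real.dist_eq] at hs
  have hs1 : |s - t| < t + 1/2 - m := lt_of_lt_of_le hs (le_trans (min_le_left _ _) (min_le_left _ _))
  have hs2 : |s - t| < (m : ℝ) + 1 - (t + 1/2) :=
    lt_of_lt_of_le hs (le_trans (min_le_left _ _) (min_le_right _ _))
  have hs3 : |s - t| < abs (|t - (m:ℝ)| - 1/4) := lt_of_lt_of_le hs (min_le_right _ _)
  have habs1 := abs_lt.mp hs1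
  have habs2 := abs_lt.mp hs2
  have hrs : round s = m := by
    rw [round_eq]
    exact Int.floor_eq_iff.mpr ⟨by linarith [habs1.1], by linarith [habs2.2]⟩
  have hrt : round t = m := by rw [round_eq]
  have hdiff : abs (|s - (m:ℝ)| - |t - (m:ℝ)|) ≤ |s - t| := by
    have := abs_abs_sub_abs_le_abs_sub (s - (m:ℝ)) (t - (m:ℝ))
    simpa using this
  have hd := abs_lt.mp (lt_of_le_of_lt hdiff hs3)
  unfold g
  rw [hrs, hrt]
  rcases lt_or_gt_of_ne hc with h' | h'
  · have hcc : abs (|t - (m:ℝ)| - 1/4) = 1/4 - |t - (m:ℝ)| := by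
      rw [abs_of_nonpos (by linarith)]; ring
    rw [hcc] at hd
    rw [if_pos (by linarith [hd.2] : |s - (m:ℝ)| ≤ 1/4), if_pos (le_of_lt h')]
  · have hcc : abs (|t - (m:ℝ)| - 1/4) = |t - (m:ℝ)| - 1/4 := abs_of_pos (by linarith)
    rw [hcc] at hd
    rw [if_neg (by linarith [hd.1] : ¬ |s - (m:ℝ)| ≤ 1/4), if_neg (not_le.mpr h')]

lemma bdd_intervalIntegrable {f : ℝ → ℝ} (hm : Measurable f) {C : ℝ}
    (hb : ∀ x, |f x| ≤ C) (a b : ℝ) : IntervalIntegrable f volume a b := by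
  rw [intervalIntegrable_iff]
  refine Measure.integrableOn_of_bounded ?_ hm.aestronglyMeasurable
    (Filter.Eventually.of_forall fun x => by simpa [Real.norm_eq_abs] using hb x)
  rw [Set.uIoc]
  exact measure_Ioc_lt_top.ne

theorem stmt2 (α β ε p q lα lβ v : ℝ) (hα : α < 0) (hβ : 0 < β) (hε0 : 0 < ε)
    (hpq : p < q)
    (hlα0 : 0 ≤ lα) (hlα1 : lα ≤ ε / 2) (hlβ0 : 0 ≤ lβ) (hlβ1 : lβ ≤ ε / 2)
    (hsum : lα + lβ = (q - p) - ε * (⌊(q - p) / ε⌋ : ℝ))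
    (hint : ∫ s in p..q, g α β (s / ε)
      = (α + β) / 2 * ((q - p) - lα - lβ) + α * lα + β * lβ)
    (hcond : (q - p) + lα - lβ ≤ 4 / (β - α))
    (hv : v = 2 / (q - p) + (1 / (q - p)) * ∫ s in p..q, g α β (s / ε))
    (n : ℝ → ℝ) (hn : n = fun x => -1 + ∫ s in p..x, (v - g α β (s / ε))) :
    MonotoneOn n (Icc p q) ∧ n q = 1 ∧ (∀ x ∈ Icc p q, -1 ≤ n x ∧ n x ≤ 1) ∧
    Calibrates α β ε p q (-1) 1 v n := by
  have hℓ : (0:ℝ) < q - p := sub_pos.2 hpq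
  have hℓ' : q - p ≠ 0 := ne_of_gt hℓ
  have hβα : (0:ℝ) < β - α := by linarith
  have hαβ : α ≤ β := by linarith
  -- the velocity dominates β
  have hvβ : β ≤ v := by
    have h4 : ((q - p) + lα - lβ) * (β - α) ≤ 4 := (le_div_iff₀ hβα).mp hcond
    have hveq : v * (q - p)
        = 2 + ((α + β) / 2 * ((q - p) - lα - lβ) + α * lα + β * lβ) := by
      rw [hv, hint]; field_simp
    rw [← mul_le_mul_iff_of_pos_right hℓ, hveq]
    nlinarith [h4]
  have hvα : 0 ≤ v - α := by linarith
  -- measurability and integrability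
  have hgm : Measurable fun s : ℝ => g α β (s / ε) :=
    (g_measurable α β).comp (measurable_id.div_const ε)
  have hf₀m : Measurable fun s : ℝ => v - g α β (s / ε) := measurable_const.sub hgm
  have hf₀b : ∀ x : ℝ, |v - g α β (x / ε)| ≤ v - α := fun x => by
    have := g_bounds α β (x / ε) hαβ
    rw [abs_le]; constructor <;> linarith [this.1, this.2]
  have hii : ∀ a b : ℝ, IntervalIntegrable (fun s => v - g α β (s / ε)) volume a b :=
    fun a b => bdd_intervalIntegrable hf₀m hf₀b a b
  have hgb : ∀ x : ℝ, |g α β (x / ε)| ≤ max (-α) β := fun x => by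
    have := g_bounds α β (x / ε) hαβ
    rw [abs_le]
    constructor <;> [linarith [le_max_left (-α) β, this.1];
      linarith [le_max_right (-α) β, this.2]]
  have hgii : ∀ a b : ℝ, IntervalIntegrable (fun s => g α β (s / ε)) volume a b :=
    fun a b => bdd_intervalIntegrable hgm hgb a b
  -- differences of n are interval integrals
  have hnd : ∀ x y : ℝ, n y - n x = ∫ s in x..y, (v - g α β (s / ε)) := by
    intro x y
    rw [hn]
    have h := intervalIntegral.integral_add_adjacent_intervals (hii p x) (hii x y)
    simp only
    linarith [h]
  have hnp : n p = -1 := by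
    rw [hn]; simp [intervalIntegral.integral_same]
  have hIeq : (∫ s in p..q, (v - g α β (s / ε))) = 2 := by
    rw [intervalIntegral.integral_sub intervalIntegrable_const (hgii p q),
      intervalIntegral.integral_const, smul_eq_mul, hv]
    field_simp
    ring
  have hnq : n q = 1 := by
    have h := hnd p q
    rw [hnp, hIeq] at h
    linarith
  -- nonnegativity of the derivative
  have hpos : ∀ u : ℝ, 0 ≤ v - g α β (u / ε) := fun u => by
    have := g_bounds α β (u / ε) hαβ
    linarith [this.2]
  have key2 : ∀ x y : ℝ, x ≤ y → 0 ≤ n y - n x := by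
    intro x y hxy
    rw [hnd x y]
    exact intervalIntegral.integral_nonneg hxy fun u _ => hpos u
  have key : ∀ x y : ℝ, x ≤ y → n y - n x ≤ (v - α) * (y - x) := by
    intro x y hxy
    rw [hnd x y]
    calc (∫ s in x..y, (v - g α β (s / ε))) ≤ ∫ _ in x..y, (v - α) :=
          intervalIntegral.integral_mono_on hxy (hii x y) intervalIntegrable_const
            (fun u _ => by have := g_bounds α β (u / ε) hαβ; linarith [this.1])
      _ = (v - α) * (y - x) := by
          rw [intervalIntegral.integral_const, smul_eq_mul]; ring
  have hmono : MonotoneOn n (Icc p q) := fun x _ y _ hxy => by linarith [key2 x y hxy]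
  have hbd : ∀ x ∈ Icc p q, -1 ≤ n x ∧ n x ≤ 1 := by
    intro x hx
    constructor
    · have := key2 p x hx.1; linarith [hnp]
    · have := key2 x q hx.2; linarith [hnq]
  -- Lipschitz bound
  have hlip : LipschitzOnWith (v - α).toNNReal n (Icc p q) := by
    rw [lipschitzOnWith_iff_dist_le_mul]
    intro x _ y _
    rw [Real.dist_eq, Real.dist_eq, Real.coe_toNNReal _ hvα]
    rcases le_total x y with h | h
    · rw [abs_sub_comm, abs_of_nonneg (key2 x y h), abs_sub_comm x y,
        abs_of_nonneg (sub_nonneg.2 h)]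
      exact key x y h
    · rw [abs_of_nonneg (key2 y x h), abs_of_nonneg (sub_nonneg.2 h)]
      exact key y x h
  -- a.e. differentiability
  have haed : ∀ᵐ x ∂(volume.restrict (Icc p q)), HasDerivAt n (v - g α β (x / ε)) x := by
    have hmz : volume (⋃ k : ℤ,
        ({ε * (k + 1/4), ε * (k - 1/4), ε * (k + 1/2)} : Set ℝ)) = 0 :=
      (Set.countable_iUnion fun k =>
        (((Set.countable_singleton _).insert _).insert _)).measure_zero _
    have hae : ∀ᵐ x ∂(volume.restrict (Icc p q)),
        x ∉ ⋃ k : ℤ, ({ε * (k + 1/4), ε * (k - 1/4), ε * (k + 1/2)} : Set ℝ) :=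
      ae_restrict_of_ae (measure_eq_zero_iff_ae_notMem.mp hmz)
    filter_upwards [hae] with x hx
    have hgc : ContinuousAt (g α β) (x / ε) := by
      apply g_continuousAt
      intro k
      refine ⟨?_, ?_, ?_⟩ <;> intro hk <;> apply hx <;> refine Set.mem_iUnion.mpr ⟨k, ?_⟩ <;>
        simp only [Set.mem_insert_iff, Set.mem_singleton_iff]
      · left
        field_simp at hk ⊢; linarith
      · right; left
        field_simp at hk ⊢; linarith
      · right; right
        field_simp at hk ⊢; linarith
    have hgcc : ContinuousAt (fun s : ℝ => g α β (s / ε)) x :=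
      hgc.comp (f := fun s : ℝ => s / ε) (continuousAt_id.div_const ε)
    have hcont : ContinuousAt (fun s : ℝ => v - g α β (s / ε)) x :=
      continuousAt_const.sub hgcc
    have hder : HasDerivAt (fun u => ∫ s in p..u, (v - g α β (s / ε)))
        (v - g α β (x / ε)) x :=
      intervalIntegral.integral_hasDerivAt_right (hii p x)
        hf₀m.aestronglyMeasurable.stronglyMeasurableAtFilter hcont
    rw [hn]
    exact hder.const_add (-1)
  exact ⟨hmono, hnq, hbd, ⟨(v - α).toNNReal, hlip⟩,
    fun x hx => mem_Icc.mpr (hbd x hx), hnp, hnq, haed⟩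
end

section
/- Let α < 0 < β, 0 < ε < 8/(β−α), and let k₁, k ∈ ℤ and p, q ∈ ℝ with ε(k₁ − 1/4) < p < ε(k₁ + 1/4) (so p lies in the open α-phase of g_ε) and q = ε(k + 1/4) with q > ε(k₁ + 3/4). Set ℓ := q − p, σ := ε(k₁ + 1/4) − p ∈ (0, ε/2), ℓ* := q − ε(k₁ + 3/4), σ* := (ε/2)·((β−α)(ℓ* + ε/2) − 4)/((β−α)(ℓ* − ε/2) + 4), and v := 2/ℓ + (α+β)/2 − ((β−α)/(2ℓ))σ, and assume (β−α)(ℓ* + ε/2 + 2σ) > 4. Then there exists a Lipschitz function n : [p,q] → [−1,1] with n(p) = −1, n(q) = 1 and n'(x) = v − g(x/ε) for almost every x ∈ [p,q] if and only if σ ≥ σ*. -/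
open MeasureTheory Set

noncomputable def tw (t : ℝ) : ℝ := |t - 1/4 - (round (t - 1/4) : ℝ)|

lemma tw_nonneg (t : ℝ) : 0 ≤ tw t := abs_nonneg _

lemma tw_le_half (t : ℝ) : tw t ≤ 1/2 := abs_sub_round _

lemma tw_lip (s t : ℝ) : tw s ≤ tw t + |s - t| := by
  have h1 : tw s ≤ |s - 1/4 - (round (t - 1/4) : ℝ)| := round_le _ _
  have h2 : |s - 1/4 - (round (t - 1/4) : ℝ)|
      ≤ |t - 1/4 - (round (t - 1/4) : ℝ)| + |s - t| := by
    have : s - 1/4 - (round (t - 1/4) : ℝ) = (t - 1/4 - (round (t - 1/4) : ℝ)) + (s - t) := by ring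
    rw [this]; exact abs_add_le _ _
  exact h1.trans h2

lemma round_eq_of {m : ℤ} {u : ℝ} (h1 : (m : ℝ) - 1/2 ≤ u) (h2 : u < m + 1/2) :
    round u = m := by
  rw [round_eq]
  refine Int.floor_eq_iff.mpr ⟨by linarith, by push_cast; linarith⟩

lemma tw_eq_left {m : ℤ} {t : ℝ} (h1 : (m : ℝ) - 1/4 ≤ t) (h2 : t ≤ m + 1/4) :
    tw t = (m : ℝ) + 1/4 - t := by
  have hr : round (t - 1/4) = m := round_eq_of (by linarith) (by linarith)
  rw [tw, hr, abs_of_nonpos (by linarith)]; ring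

lemma tw_eq_right {m : ℤ} {t : ℝ} (h1 : (m : ℝ) + 1/4 ≤ t) (h2 : t < m + 3/4) :
    tw t = t - 1/4 - (m : ℝ) := by
  have hr : round (t - 1/4) = m := round_eq_of (by linarith) (by linarith)
  rw [tw, hr, abs_of_nonneg (by linarith)]

lemma g_eq_alpha {α β x : ℝ} (m : ℤ) (h : |x - (m : ℝ)| ≤ 1/4) : g α β x = α := by
  rw [g, if_pos ((round_le x m).trans h)]

lemma g_eq_beta {α β x : ℝ} {m : ℤ} (h1 : (m : ℝ) + 1/4 < x) (h2 : x < m + 3/4) :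
    g α β x = β := by
  rw [g, if_neg]
  intro hc
  obtain ⟨hc1, hc2⟩ := abs_le.mp hc
  rcases le_or_gt (round x) m with h | h
  · have : ((round x : ℤ) : ℝ) ≤ m := by exact_mod_cast h
    linarith
  · have : (m : ℝ) + 1 ≤ (round x : ℝ) := by exact_mod_cast h
    linarith

lemma tw_deriv_neg {ε x : ℝ} (hε0 : 0 < ε) {m : ℤ}
    (h1 : (m : ℝ) - 1/4 < x / ε) (h2 : x / ε < m + 1/4) :
    HasDerivAt (fun y => tw (y / ε)) (-(1/ε)) x := by
  have hd : HasDerivAt (fun y : ℝ => (m : ℝ) + 1/4 - y / ε) (-(1/ε)) x := by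
    simpa [Pi.sub_def] using (hasDerivAt_const x ((m : ℝ) + 1/4)).sub ((hasDerivAt_id x).div_const ε)
  apply hd.congr_of_eventuallyEq
  have hopen : IsOpen {y : ℝ | (m : ℝ) - 1/4 < y / ε ∧ y / ε < m + 1/4} := by
    have : Continuous fun y : ℝ => y / ε := continuous_id.div_const ε
    exact (isOpen_Ioo.preimage this)
  filter_upwards [hopen.mem_nhds ⟨h1, h2⟩] with y hy
  exact tw_eq_left hy.1.le hy.2.le

lemma tw_deriv_pos {ε x : ℝ} (hε0 : 0 < ε) {m : ℤ}
    (h1 : (m : ℝ) + 1/4 < x / ε) (h2 : x / ε < m + 3/4) :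
    HasDerivAt (fun y => tw (y / ε)) (1/ε) x := by
  have hd : HasDerivAt (fun y : ℝ => y / ε - (1/4 + (m : ℝ))) (1/ε) x := by
    simpa [Pi.sub_def] using ((hasDerivAt_id x).div_const ε).sub (hasDerivAt_const x (1/4 + (m : ℝ)))
  apply hd.congr_of_eventuallyEq
  have hopen : IsOpen {y : ℝ | (m : ℝ) + 1/4 < y / ε ∧ y / ε < m + 3/4} := by
    have : Continuous fun y : ℝ => y / ε := continuous_id.div_const ε
    exact (isOpen_Ioo.preimage this)
  filter_upwards [hopen.mem_nhds ⟨h1, h2⟩] with y hy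
  rw [tw_eq_right hy.1.le hy.2]; ring

set_option maxHeartbeats 1000000 in
lemma calib_exists (α β ε p q σ v : ℝ) (k₁ k : ℤ)
    (hβα : 0 < β - α) (hε0 : 0 < ε)
    (hp1 : ε * (k₁ - 1/4) < p) (hp2 : p < ε * (k₁ + 1/4))
    (hq : q = ε * (k + 1/4))
    (hσ : σ = ε * (k₁ + 1/4) - p)
    (hσ0 : 0 < σ)
    (hc : 0 < v - (α + β)/2)
    (hkey : (v - (α + β)/2) * (q - p) + (β - α)/2 * σ = 2)
    (hEc : 0 ≤ (v - (α + β)/2) * (σ + ε/2) + (β - α)/2 * σ - ε * (β - α)/4)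
    (hx2q : p < q) :
    ∃ n : ℝ → ℝ, Calibrates α β ε p q (-1) 1 v n := by
  obtain ⟨c, hcdef⟩ : ∃ c : ℝ, c = v - (α + β)/2 := ⟨_, rfl⟩
  rw [← hcdef] at hc hkey hEc
  have hεne : ε ≠ 0 := ne_of_gt hε0
  have hpε1 : (k₁ : ℝ) - 1/4 < p / ε := by rw [lt_div_iff₀ hε0]; nlinarith
  have hpε2 : p / ε < (k₁ : ℝ) + 1/4 := by rw [div_lt_iff₀ hε0]; nlinarith
  have htwp : tw (p / ε) = σ / ε := by
    rw [tw_eq_left hpε1.le hpε2.le, hσ]; field_simp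
  have hqε : q / ε = (k : ℝ) + 1/4 := by rw [hq]; field_simp
  have htwq : tw (q / ε) = 0 := by
    rw [hqε, tw_eq_left (m := k) (by linarith) (by linarith)]; ring
  obtain ⟨A, hAdef⟩ : ∃ A : ℝ, A = ε * ((k₁ : ℝ) + 1/4) := ⟨_, rfl⟩
  rw [← hAdef] at hp2 hσ
  have hA : p + σ = A := by rw [hσ]; ring
  have hAε : A / ε = (k₁ : ℝ) + 1/4 := by rw [hAdef]; field_simp
  have htwA : tw (A / ε) = 0 := by
    rw [hAε, tw_eq_left (m := k₁) (by linarith) (by linarith)]; ring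
  refine ⟨fun x => -1 + c * (x - p) - ε * (β - α)/2 * tw (x/ε) + (β - α)/2 * σ,
    ⟨Real.toNNReal (|c| + (β - α)/2), ?_⟩, ?_, ?_, ?_, ?_⟩
  · -- Lipschitz
    rw [lipschitzOnWith_iff_dist_le_mul]
    intro x _ y _
    rw [Real.dist_eq, Real.dist_eq, Real.coe_toNNReal _ (by positivity)]
    have htw : |tw (x/ε) - tw (y/ε)| ≤ |x - y| / ε := by
      have hd : |x/ε - y/ε| = |x - y| / ε := by
        rw [div_sub_div_same, abs_div, abs_of_pos hε0]
      rw [abs_sub_le_iff]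
      constructor
      · have := tw_lip (x/ε) (y/ε); rw [hd] at this; linarith
      · have := tw_lip (y/ε) (x/ε)
        rw [abs_sub_comm, hd] at this; linarith
    have e1 : (-1 + c * (x - p) - ε * (β - α)/2 * tw (x/ε) + (β - α)/2 * σ)
        - (-1 + c * (y - p) - ε * (β - α)/2 * tw (y/ε) + (β - α)/2 * σ)
        = c * (x - y) - ε * (β - α)/2 * (tw (x/ε) - tw (y/ε)) := by ring
    rw [e1]
    calc |c * (x - y) - ε * (β - α)/2 * (tw (x/ε) - tw (y/ε))|
        ≤ |c * (x - y)| + |ε * (β - α)/2 * (tw (x/ε) - tw (y/ε))| := abs_sub _ _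
      _ = |c| * |x - y| + ε * (β - α)/2 * |tw (x/ε) - tw (y/ε)| := by
          rw [abs_mul, abs_mul, abs_of_nonneg (by positivity : (0:ℝ) ≤ ε * (β - α)/2)]
      _ ≤ |c| * |x - y| + ε * (β - α)/2 * (|x - y| / ε) := by
          have := mul_le_mul_of_nonneg_left htw (by positivity : (0:ℝ) ≤ ε * (β - α)/2)
          linarith
      _ = (|c| + (β - α)/2) * |x - y| := by field_simp
  · -- range
    intro x hx
    obtain ⟨hx1, hx2⟩ := hx
    have hTnn : 0 ≤ tw (x/ε) := tw_nonneg _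
    rw [Set.mem_Icc]
    constructor
    · -- lower bound
      have hgoal : 0 ≤ c * (x - p) - ε * (β - α)/2 * tw (x/ε) + (β - α)/2 * σ := by
        rcases le_or_gt x A with hxA | hxA
        · have hb : ε * tw (x/ε) ≤ A - x := by
            have h := tw_lip (x/ε) (A/ε)
            rw [htwA] at h
            have hd : |x/ε - A/ε| = |x - A| / ε := by
              rw [div_sub_div_same, abs_div, abs_of_pos hε0]
            rw [hd, abs_of_nonpos (by linarith)] at h
            rw [← sub_nonneg]
            have h2 : 0 ≤ (A - x) - ε * tw (x/ε) := by
              have h3 : ε * tw (x/ε) ≤ ε * (-(x - A) / ε) :=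
                mul_le_mul_of_nonneg_left (by linarith) hε0.le
              have h4 : ε * (-(x - A) / ε) = A - x := by field_simp; ring
              linarith
            linarith
          have hb' : ε * tw (x/ε) ≤ σ - (x - p) := by linarith
          have m1 : (β - α)/2 * (ε * tw (x/ε)) ≤ (β - α)/2 * (σ - (x - p)) :=
            mul_le_mul_of_nonneg_left hb' (by linarith)
          have m2 : 0 ≤ c * (x - p) := mul_nonneg hc.le (by linarith)
          have m3 : 0 ≤ (β - α)/2 * (x - p) := mul_nonneg (by linarith) (by linarith)
          nlinarith [m1, m2, m3]
        · rcases le_or_gt x (A + ε/2) with hxB | hxB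
          · have hb : ε * tw (x/ε) ≤ x - A := by
              have h := tw_lip (x/ε) (A/ε)
              rw [htwA] at h
              have hd : |x/ε - A/ε| = |x - A| / ε := by
                rw [div_sub_div_same, abs_div, abs_of_pos hε0]
              rw [hd, abs_of_nonneg (by linarith)] at h
              have h3 : ε * tw (x/ε) ≤ ε * ((x - A) / ε) :=
                mul_le_mul_of_nonneg_left (by linarith) hε0.le
              have h4 : ε * ((x - A) / ε) = x - A := by field_simp
              linarith
            have P1 : 0 ≤ (ε/2 - (x - A)) * (c * σ + (β - α)/2 * σ) := by
              apply mul_nonneg (by linarith)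
              have q1 := mul_nonneg hc.le hσ0.le
              have q2 := mul_nonneg (by linarith : (0:ℝ) ≤ (β - α)/2) hσ0.le
              linarith
            have P2 : 0 ≤ (x - A) * (c * (σ + ε/2) + (β - α)/2 * σ - ε * (β - α)/4) :=
              mul_nonneg (by linarith) hEc
            have P3 : 0 ≤ ε/2 * ((β - α)/2 * (x - A) - (β - α)/2 * (ε * tw (x/ε))) := by
              apply mul_nonneg (by linarith)
              have := mul_le_mul_of_nonneg_left hb (by linarith : (0:ℝ) ≤ (β - α)/2)
              linarith
            have P4 : ε/2 * (c * (x - p)) = ε/2 * (c * (σ + (x - A))) := by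
              rw [show x - p = σ + (x - A) from by linarith]
            have hhalf : 0 ≤ ε/2 * (c * (x - p) - ε * (β - α)/2 * tw (x/ε)
                + (β - α)/2 * σ) := by nlinarith [P1, P2, P3, P4]
            have := (mul_nonneg_iff_of_pos_left (by linarith : (0:ℝ) < ε/2)).mp hhalf
            linarith
          · have m1 : ε * (β - α)/2 * tw (x/ε) ≤ ε * (β - α)/2 * (1/2) :=
              mul_le_mul_of_nonneg_left (tw_le_half _) (by positivity)
            have m2 : c * (σ + ε/2) ≤ c * (x - p) :=
              mul_le_mul_of_nonneg_left (by linarith) hc.le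
            linarith [m1, m2, hEc]
      linarith
    · -- upper bound
      have m1 : 0 ≤ c * (q - x) := mul_nonneg hc.le (by linarith)
      have m2 : 0 ≤ ε * (β - α)/2 * tw (x/ε) := mul_nonneg (by positivity) hTnn
      nlinarith [hkey, m1, m2]
  · -- n p = -1
    show -1 + c * (p - p) - ε * (β - α)/2 * tw (p/ε) + (β - α)/2 * σ = -1
    rw [htwp]; field_simp; ring
  · -- n q = 1
    show -1 + c * (q - p) - ε * (β - α)/2 * tw (q/ε) + (β - α)/2 * σ = 1
    rw [htwq]; linear_combination hkey
  · -- a.e. derivative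
    have hS : (Set.range fun m : ℤ => ε * ((m : ℝ)/2 + 1/4)).Countable :=
      Set.countable_range _
    refine ae_restrict_of_ae ?_
    filter_upwards [hS.ae_notMem volume] with x hx
    obtain ⟨m, hm⟩ : ∃ m : ℤ, m = round (x/ε - 1/4) := ⟨_, rfl⟩
    have hru : |x/ε - 1/4 - (m : ℝ)| ≤ 1/2 := by rw [hm]; exact abs_sub_round _
    have hne0 : x/ε - 1/4 - (m : ℝ) ≠ 0 := by
      intro h
      apply hx
      refine ⟨2 * m, ?_⟩
      have h2 : x / ε = (m : ℝ) + 1/4 := by linarith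
      have hx4 : x = ε * ((m : ℝ) + 1/4) := by rw [← h2]; field_simp
      rw [hx4]; push_cast; ring
    have hneh : x/ε - 1/4 - (m : ℝ) ≠ -(1/2) := by
      intro h
      apply hx
      refine ⟨2 * m - 1, ?_⟩
      have h2 : x / ε = (m : ℝ) - 1/4 := by linarith
      have hx4 : x = ε * ((m : ℝ) - 1/4) := by rw [← h2]; field_simp
      rw [hx4]; push_cast; ring
    have hlin : HasDerivAt (fun y : ℝ => -1 + c * (y - p)) c x := by
      simpa using (((hasDerivAt_id x).sub_const p).const_mul c).const_add (-1 : ℝ)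
    rcases hne0.lt_or_gt with hr | hr
    · -- α-phase
      have hrlow : -(1/2) < x/ε - 1/4 - (m : ℝ) :=
        lt_of_le_of_ne (abs_le.mp hru).1 (Ne.symm hneh)
      have hb1 : (m : ℝ) - 1/4 < x / ε := by linarith
      have hb2 : x / ε < (m : ℝ) + 1/4 := by linarith
      have htw := tw_deriv_neg hε0 hb1 hb2
      have hg : g α β (x / ε) = α :=
        g_eq_alpha m (abs_le.mpr ⟨by linarith, by linarith⟩)
      rw [hg]
      have hd := (hlin.sub (htw.const_mul (ε * (β - α)/2))).add_const ((β - α)/2 * σ)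
      exact hd.congr_deriv (by rw [hcdef]; field_simp; ring)
    · -- β-phase
      have hrhi : x/ε - 1/4 - (m : ℝ) < 1/2 := by
        rcases lt_or_eq_of_le (abs_le.mp hru).2 with h | h
        · exact h
        · exfalso
          have h2 : round (x/ε - 1/4) = m + 1 := by
            apply round_eq_of (by push_cast; linarith) (by push_cast; linarith)
          rw [← hm] at h2
          omega
      have hb1 : (m : ℝ) + 1/4 < x / ε := by linarith
      have hb2 : x / ε < (m : ℝ) + 3/4 := by linarith
      have htw := tw_deriv_pos hε0 hb1 hb2
      have hg : g α β (x / ε) = β := g_eq_beta hb1 hb2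
      rw [hg]
      have hd := (hlin.sub (htw.const_mul (ε * (β - α)/2))).add_const ((β - α)/2 * σ)
      exact hd.congr_deriv (by rw [hcdef]; field_simp; ring)

set_option maxHeartbeats 1000000 in
lemma calib_value (α β ε p q v : ℝ) (k₁ : ℤ) (n : ℝ → ℝ)
    (hε0 : 0 < ε)
    (hp1 : ε * (k₁ - 1/4) < p) (hp2 : p < ε * (k₁ + 1/4))
    (hBq : ε * (k₁ + 3/4) < q)
    (hcal : Calibrates α β ε p q (-1) 1 v n) :
    n (ε * (k₁ + 3/4)) = -1 + v * (ε * (k₁ + 3/4) - p)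
      - α * (ε * (k₁ + 1/4) - p) - β * (ε/2) := by
  obtain ⟨⟨K, hK⟩, hmem, hnp, hnq, hderiv⟩ := hcal
  have hεne : ε ≠ 0 := ne_of_gt hε0
  obtain ⟨A, hAdef⟩ : ∃ A : ℝ, A = ε * ((k₁ : ℝ) + 1/4) := ⟨_, rfl⟩
  obtain ⟨B, hBdef⟩ : ∃ B : ℝ, B = ε * ((k₁ : ℝ) + 3/4) := ⟨_, rfl⟩
  rw [← hAdef] at hp2
  rw [← hBdef] at hBq ⊢
  have hpA : p < A := hp2
  have hBA : B - A = ε / 2 := by rw [hAdef, hBdef]; ring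
  have hAB : A < B := by linarith
  have hpq : p < q := by
    have : p < B := by linarith
    linarith
  have hIcc : Ioo p B ⊆ Icc p q := fun y hy => ⟨hy.1.le, by linarith [hy.2, hBq]⟩
  obtain ⟨f, hf, hfeq⟩ := hK.extend_real
  have hderiv' : ∀ᵐ x ∂volume.restrict (Ioo p B), HasDerivAt f (v - g α β (x/ε)) x := by
    have h1 := ae_restrict_of_ae_restrict_of_subset hIcc hderiv
    filter_upwards [h1, ae_restrict_mem measurableSet_Ioo] with x hx hxs
    apply hx.congr_of_eventuallyEq
    filter_upwards [isOpen_Ioo.mem_nhds hxs] with y hy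
    exact (hfeq (hIcc hy)).symm
  -- the two monotone companions
  have habs : ∀ x y : ℝ, x ≤ y → |f x - f y| ≤ (K : ℝ) * (y - x) := by
    intro x y hxy
    have h := hf.dist_le_mul x y
    rw [Real.dist_eq, Real.dist_eq] at h
    have h2 : |x - y| = y - x := by rw [abs_of_nonpos (by linarith : x - y ≤ 0)]; ring
    rw [h2] at h
    exact h
  have hm1 : Monotone (fun x => (K : ℝ) * x + f x) := by
    intro x y hxy
    have h := (le_abs_self (f x - f y)).trans (habs x y hxy)
    have h2 : (K : ℝ) * (y - x) = K * y - K * x := by ring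
    show (K : ℝ) * x + f x ≤ (K : ℝ) * y + f y
    linarith
  have hm2 : Monotone (fun x => (K : ℝ) * x - f x) := by
    intro x y hxy
    have h3 : |f y - f x| ≤ (K : ℝ) * (y - x) := by
      rw [abs_sub_comm]; exact habs x y hxy
    have h := (le_abs_self (f y - f x)).trans h3
    have h2 : (K : ℝ) * (y - x) = K * y - K * x := by ring
    show (K : ℝ) * x - f x ≤ (K : ℝ) * y - f y
    linarith
  have hfc : Continuous f := hf.continuous
  have hst1 : ∀ x, hm1.stieltjesFunction x = (K : ℝ) * x + f x := by
    intro x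
    rw [hm1.stieltjesFunction_eq]
    exact rightLim_eq_of_tendsto
      (((continuous_const.mul continuous_id).add hfc).continuousAt.continuousWithinAt)
  have hst2 : ∀ x, hm2.stieltjesFunction x = (K : ℝ) * x - f x := by
    intro x
    rw [hm2.stieltjesFunction_eq]
    exact rightLim_eq_of_tendsto
      (((continuous_const.mul continuous_id).sub hfc).continuousAt.continuousWithinAt)
  -- the integral of g over (p, B)
  have hApos : 0 ≤ A - p := by linarith
  have hval1 : ∀ y ∈ Ioc p A, g α β (y/ε) = α := by
    intro y hy
    apply g_eq_alpha k₁
    rw [abs_le]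
    have h1 : ε * ((k₁ : ℝ) - 1/4) < y := by linarith [hy.1]
    have h2 : y ≤ ε * ((k₁ : ℝ) + 1/4) := by rw [← hAdef]; exact hy.2
    constructor
    · have h3 : (k₁ : ℝ) - 1/4 < y / ε := by rw [lt_div_iff₀ hε0]; nlinarith
      linarith
    · have h4 : y / ε ≤ (k₁ : ℝ) + 1/4 := by rw [div_le_iff₀ hε0]; nlinarith
      linarith
  have hval2 : ∀ y ∈ Ioo A B, g α β (y/ε) = β := by
    intro y hy
    refine g_eq_beta (m := k₁) ?_ ?_
    · rw [lt_div_iff₀ hε0]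
      have := hy.1; rw [hAdef] at this; nlinarith
    · rw [div_lt_iff₀ hε0]
      have := hy.2; rw [hBdef] at this; nlinarith
  have hdisj : Disjoint (Ioc p A) (Ioo A B) := by
    rw [Set.disjoint_left]
    intro y hy1 hy2
    exact absurd hy1.2 (not_le.mpr hy2.1)
  have hsplit : Ioc p A ∪ Ioo A B = Ioo p B := Set.Ioc_union_Ioo_eq_Ioo hpA.le hAB
  have hint1 : IntegrableOn (fun y => g α β (y/ε)) (Ioc p A) volume :=
    ((integrableOn_const_iff).mpr (Or.inr measure_Ioc_lt_top)).congr_fun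
      (fun y hy => (hval1 y hy).symm) measurableSet_Ioc
  have hint2 : IntegrableOn (fun y => g α β (y/ε)) (Ioo A B) volume :=
    ((integrableOn_const_iff).mpr (Or.inr measure_Ioo_lt_top)).congr_fun
      (fun y hy => (hval2 y hy).symm) measurableSet_Ioo
  have hgint : IntegrableOn (fun y => g α β (y/ε)) (Ioo p B) volume := by
    rw [← hsplit]; exact hint1.union hint2
  have hgval : ∫ y in Ioo p B, g α β (y/ε) = α * (A - p) + β * (ε/2) := by
    rw [← hsplit, setIntegral_union hdisj measurableSet_Ioo hint1 hint2,
      setIntegral_congr_fun measurableSet_Ioc hval1,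
      setIntegral_congr_fun measurableSet_Ioo hval2,
      setIntegral_const, setIntegral_const,
      Real.volume_real_Ioc_of_le hpA.le, Real.volume_real_Ioo_of_le hAB.le, smul_eq_mul, smul_eq_mul, hBA, mul_comm α,
      mul_comm β]
  have hconst : ∀ w : ℝ, IntegrableOn (fun _ : ℝ => w) (Ioo p B) volume := fun w =>
    (integrableOn_const_iff).mpr (Or.inr measure_Ioo_lt_top)
  -- first inequality
  have int1 : v * (B - p) - (α * (A - p) + β * (ε/2)) ≤ f B - f p := by
    have key1 : ∀ᵐ x ∂volume.restrict (Ioo p B),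
        (hm1.stieltjesFunction.measure.rnDeriv volume x).toReal
          = ((K : ℝ) + v) - g α β (x/ε) := by
      filter_upwards [ae_restrict_of_ae hm1.ae_hasDerivAt, hderiv'] with x h1 h2
      have hF : HasDerivAt (fun y => (K : ℝ) * y + f y) (((K : ℝ) + v) - g α β (x/ε)) x := by
        have := ((hasDerivAt_id x).const_mul (K : ℝ)).add h2
        simpa [Pi.add_def] using this.congr_deriv (by ring)
      exact h1.unique hF
    have e1 : ∫ x in Ioo p B, (((K : ℝ) + v) - g α β (x/ε))
        = ∫ x in Ioo p B, (hm1.stieltjesFunction.measure.rnDeriv volume x).toReal :=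
      (setIntegral_congr_ae measurableSet_Ioo
        ((ae_restrict_iff' measurableSet_Ioo).mp key1)).symm
    have e2 : ∫ x in Ioo p B, (((K : ℝ) + v) - g α β (x/ε))
        = ((K : ℝ) + v) * (B - p) - (α * (A - p) + β * (ε/2)) := by
      rw [integral_sub (hconst _) hgint, setIntegral_const, Real.volume_real_Ioo_of_le (by linarith), smul_eq_mul, hgval]
      ring
    have e3 : ∫ x in Ioo p B, (hm1.stieltjesFunction.measure.rnDeriv volume x).toReal
        ≤ ((K : ℝ) * B + f B) - ((K : ℝ) * p + f p) := by
      rw [integral_toReal (hm1.stieltjesFunction.measure.measurable_rnDeriv volume).aemeasurable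
        (ae_restrict_of_ae (hm1.stieltjesFunction.measure.rnDeriv_lt_top volume))]
      have h4 : (∫⁻ x in Ioo p B, hm1.stieltjesFunction.measure.rnDeriv volume x ∂volume)
          ≤ hm1.stieltjesFunction.measure (Ioc p B) :=
        le_trans (Measure.setLIntegral_rnDeriv_le _)
          (measure_mono Ioo_subset_Ioc_self)
      have h5 : hm1.stieltjesFunction.measure (Ioc p B)
          = ENNReal.ofReal (((K : ℝ) * B + f B) - ((K : ℝ) * p + f p)) := by
        rw [hm1.stieltjesFunction.measure_Ioc, hst1, hst1]
      calc (∫⁻ x in Ioo p B, hm1.stieltjesFunction.measure.rnDeriv volume x ∂volume).toReal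
          ≤ (hm1.stieltjesFunction.measure (Ioc p B)).toReal := by
            apply ENNReal.toReal_mono _ h4
            rw [h5]; exact ENNReal.ofReal_ne_top
        _ = ((K : ℝ) * B + f B) - ((K : ℝ) * p + f p) := by
            rw [h5, ENNReal.toReal_ofReal]
            have := hm1 (le_of_lt (lt_of_lt_of_le hpA hAB.le))
            simpa using this
    nlinarith [e1, e2, e3]
  -- second inequality
  have int2 : f B - f p ≤ v * (B - p) - (α * (A - p) + β * (ε/2)) := by
    have key2 : ∀ᵐ x ∂volume.restrict (Ioo p B),
        (hm2.stieltjesFunction.measure.rnDeriv volume x).toReal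
          = ((K : ℝ) - v) + g α β (x/ε) := by
      filter_upwards [ae_restrict_of_ae hm2.ae_hasDerivAt, hderiv'] with x h1 h2
      have hF : HasDerivAt (fun y => (K : ℝ) * y - f y) (((K : ℝ) - v) + g α β (x/ε)) x := by
        have := ((hasDerivAt_id x).const_mul (K : ℝ)).sub h2
        simpa [Pi.sub_def] using this.congr_deriv (by ring)
      exact h1.unique hF
    have e1 : ∫ x in Ioo p B, (((K : ℝ) - v) + g α β (x/ε))
        = ∫ x in Ioo p B, (hm2.stieltjesFunction.measure.rnDeriv volume x).toReal :=
      (setIntegral_congr_ae measurableSet_Ioo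
        ((ae_restrict_iff' measurableSet_Ioo).mp key2)).symm
    have e2 : ∫ x in Ioo p B, (((K : ℝ) - v) + g α β (x/ε))
        = ((K : ℝ) - v) * (B - p) + (α * (A - p) + β * (ε/2)) := by
      rw [integral_add (hconst _) hgint, setIntegral_const, Real.volume_real_Ioo_of_le (by linarith), smul_eq_mul, hgval]
      ring
    have e3 : ∫ x in Ioo p B, (hm2.stieltjesFunction.measure.rnDeriv volume x).toReal
        ≤ ((K : ℝ) * B - f B) - ((K : ℝ) * p - f p) := by
      rw [integral_toReal (hm2.stieltjesFunction.measure.measurable_rnDeriv volume).aemeasurable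
        (ae_restrict_of_ae (hm2.stieltjesFunction.measure.rnDeriv_lt_top volume))]
      have h4 : (∫⁻ x in Ioo p B, hm2.stieltjesFunction.measure.rnDeriv volume x ∂volume)
          ≤ hm2.stieltjesFunction.measure (Ioc p B) :=
        le_trans (Measure.setLIntegral_rnDeriv_le _)
          (measure_mono Ioo_subset_Ioc_self)
      have h5 : hm2.stieltjesFunction.measure (Ioc p B)
          = ENNReal.ofReal (((K : ℝ) * B - f B) - ((K : ℝ) * p - f p)) := by
        rw [hm2.stieltjesFunction.measure_Ioc, hst2, hst2]
      calc (∫⁻ x in Ioo p B, hm2.stieltjesFunction.measure.rnDeriv volume x ∂volume).toReal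
          ≤ (hm2.stieltjesFunction.measure (Ioc p B)).toReal := by
            apply ENNReal.toReal_mono _ h4
            rw [h5]; exact ENNReal.ofReal_ne_top
        _ = ((K : ℝ) * B - f B) - ((K : ℝ) * p - f p) := by
            rw [h5, ENNReal.toReal_ofReal]
            have := hm2 (le_of_lt (lt_of_lt_of_le hpA hAB.le))
            simpa using this
    nlinarith [e1, e2, e3]
  have hfB : f B = n B := (hfeq ⟨by linarith, by linarith⟩).symm
  have hfp : f p = n p := (hfeq ⟨le_refl p, hpq.le⟩).symm
  rw [hfB, hfp, hnp] at int1 int2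
  have : n B = -1 + v * (B - p) - (α * (A - p) + β * (ε/2)) := by linarith
  rw [this, hAdef]
  ring

set_option maxHeartbeats 1000000

theorem stmt11 (α β ε p q : ℝ) (k₁ k : ℤ) (hα : α < 0) (hβ : 0 < β)
    (hε0 : 0 < ε) (hε : ε < 8 / (β - α))
    (hp1 : ε * (k₁ - 1/4) < p) (hp2 : p < ε * (k₁ + 1/4))
    (hq : q = ε * (k + 1/4)) (hqgt : ε * (k₁ + 3/4) < q)
    (σ lstar σstar v : ℝ)
    (hσ : σ = ε * (k₁ + 1/4) - p)
    (hlstar : lstar = q - ε * (k₁ + 3/4))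
    (hσstar : σstar = ε / 2 * ((β - α) * (lstar + ε / 2) - 4)
      / ((β - α) * (lstar - ε / 2) + 4))
    (hv : v = 2 / (q - p) + (α + β) / 2 - (β - α) / (2 * (q - p)) * σ)
    (hcond : 4 < (β - α) * (lstar + ε / 2 + 2 * σ)) :
    (∃ n : ℝ → ℝ, Calibrates α β ε p q (-1) 1 v n) ↔ σstar ≤ σ := by
  have hβα : 0 < β - α := by linarith
  have hε8 : ε * (β - α) < 8 := by
    have h := (lt_div_iff₀ hβα).mp hε; linarith
  have hσ0 : 0 < σ := by rw [hσ]; linarith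
  have hσε : σ < ε / 2 := by
    have he : ε * ((k₁ : ℝ) + 1/4) - ε * ((k₁ : ℝ) - 1/4) = ε/2 := by ring
    rw [hσ]; linarith
  have hkk : (k₁ : ℝ) + 1 ≤ (k : ℝ) := by
    have h1 : ε * ((k₁ : ℝ) + 3/4) < ε * ((k : ℝ) + 1/4) := by rw [← hq]; exact hqgt
    have h2 : (k₁ : ℝ) + 3/4 < (k : ℝ) + 1/4 := lt_of_mul_lt_mul_left h1 hε0.le
    have h3 : k₁ < k := by exact_mod_cast (by linarith : (k₁ : ℝ) < (k : ℝ))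
    exact_mod_cast Int.add_one_le_iff.mpr h3
  have hls : lstar - ε/2 = ε * ((k : ℝ) - k₁ - 1) := by rw [hlstar, hq]; ring
  have hls0 : 0 ≤ lstar - ε/2 := by
    rw [hls]; exact mul_nonneg hε0.le (by linarith)
  have hden : 0 < (β - α) * (lstar - ε/2) + 4 := by
    have := mul_nonneg hβα.le hls0; linarith
  have hl : q - p = σ + lstar + ε/2 := by rw [hσ, hlstar]; ring
  have hl0 : 0 < q - p := by rw [hl]; linarith
  have hlne : q - p ≠ 0 := ne_of_gt hl0
  have hId : 2 * (q - p) * ((v - α) * σ + (v - β) * (ε/2))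
      = σ * ((β - α) * (lstar - ε/2) + 4) - ε/2 * ((β - α) * (lstar + ε/2) - 4) := by
    have h1 : v * (q - p) = 2 + (α + β)/2 * (q - p) - (β - α)/2 * σ := by
      rw [hv]; field_simp
    linear_combination (2*σ + ε) * h1 + ((β - α) * (σ - ε/2)) * hl
  have hEiff : (σstar ≤ σ) ↔ 0 ≤ (v - α) * σ + (v - β) * (ε/2) := by
    rw [hσstar, div_le_iff₀ hden]
    constructor
    · intro h
      have h2 : 0 ≤ 2 * (q - p) * ((v - α) * σ + (v - β) * (ε/2)) := by rw [hId]; linarith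
      nlinarith [h2, hl0]
    · intro h
      have h2 : 0 ≤ 2 * (q - p) * ((v - α) * σ + (v - β) * (ε/2)) :=
        mul_nonneg (by linarith) h
      rw [hId] at h2; linarith
  rw [hEiff]
  constructor
  · rintro ⟨n, hcal⟩
    have hval := calib_value α β ε p q v k₁ n hε0 hp1 hp2 hqgt hcal
    have hB : ε * ((k₁ : ℝ) + 3/4) ∈ Icc p q := ⟨by linarith, by linarith [hqgt]⟩
    have hlow := (Set.mem_Icc.mp (hcal.2.1 _ hB)).1
    rw [hval] at hlow
    have e1 : v * (ε * ((k₁ : ℝ) + 3/4) - p) = v * σ + v * (ε/2) := by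
      rw [show ε * ((k₁ : ℝ) + 3/4) - p = σ + ε/2 from by rw [hσ]; ring]; ring
    have e2 : α * (ε * ((k₁ : ℝ) + 1/4) - p) = α * σ := by rw [← hσ]
    nlinarith [hlow, e1, e2]
  · intro hE
    have hc : 0 < v - (α + β)/2 := by
      have h2 : v - (α + β)/2 = (4 - (β - α) * σ) / (2 * (q - p)) := by
        rw [hv]; field_simp; ring
      rw [h2]
      apply div_pos ?_ (by linarith)
      nlinarith [mul_pos hβα (by linarith : (0:ℝ) < ε/2 - σ)]
    have hkey : (v - (α + β)/2) * (q - p) + (β - α)/2 * σ = 2 := by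
      rw [hv]; field_simp; ring
    have hEc : 0 ≤ (v - (α + β)/2) * (σ + ε/2) + (β - α)/2 * σ - ε * (β - α)/4 := by
      have he : (v - α) * σ + (v - β) * (ε/2)
          = (v - (α + β)/2) * (σ + ε/2) + (β - α)/2 * σ - ε * (β - α)/4 := by ring
      linarith
    exact calib_exists α β ε p q σ v k₁ k hβα hε0 hp1 hp2 hq hσ hσ0 hc hkey hEc
      (by linarith)
end
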